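/- PBH criterion: the pair (A, B) is controllable if and only if rank(λI − A, B) = n for every eigenvalue λ of A. -/

import Mathlib

open Matrix

/-- The Kalman controllability matrix `(B, AB, …, A^{n-1}B)`. -/
noncomputable def kalmanMatrix {n m : ℕ} (A : Matrix (Fin n) (Fin n) ℂ)
    (B : Matrix (Fin n) (Fin m) ℂ) : Matrix (Fin n) (Fin n × Fin m) ℂ :=
  Matrix.of fun i p => (A ^ (p.1 : ℕ) * B) i p.2

lemma vecMul_smul_mat {n : ℕ} {k : Type*} [Fintype k] (v : Fin n → ℂ) (c : ℂ)
    (M : Matrix (Fin n) k ℂ) : v ᵥ* (c • M) = c • (v ᵥ* M) := by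
  funext j
  simp [Matrix.vecMul, dotProduct, Finset.mul_sum, mul_left_comm]

lemma vecMul_sum' {n : ℕ} {k : Type*} [Fintype k] {ι : Type*} (s : Finset ι)
    (v : Fin n → ℂ) (f : ι → Matrix (Fin n) k ℂ) :
    v ᵥ* (∑ i ∈ s, f i) = ∑ i ∈ s, v ᵥ* f i := by
  induction s using Finset.cons_induction with
  | empty => simp
  | cons a s ha ih => rw [Finset.sum_cons, Finset.sum_cons, Matrix.vecMul_add, ih]

/-- Full row rank iff trivial left kernel. -/
lemma full_row_rank_iff {n : ℕ} {k : Type*} [Fintype k] (M : Matrix (Fin n) k ℂ) :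
    M.rank = n ↔ ∀ y : Fin n → ℂ, y ᵥ* M = 0 → y = 0 := by
  rw [← Matrix.rank_transpose]
  have hrn := LinearMap.finrank_range_add_finrank_ker (Mᵀ.mulVecLin)
  have hdom : Module.finrank ℂ (Fin n → ℂ) = n := by simp
  rw [hdom] at hrn
  have hker : (∀ y : Fin n → ℂ, y ᵥ* M = 0 → y = 0) ↔
      LinearMap.ker (Mᵀ.mulVecLin) = ⊥ := by
    rw [LinearMap.ker_eq_bot']
    constructor
    · intro h y hy
      exact h y (by rwa [← Matrix.mulVec_transpose, ← Matrix.mulVecLin_apply])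
    · intro h y hy
      exact h y (by rwa [Matrix.mulVecLin_apply, Matrix.mulVec_transpose])
  rw [hker]
  unfold Matrix.rank
  constructor
  · intro h
    have : Module.finrank ℂ (LinearMap.ker (Mᵀ.mulVecLin)) = 0 := by omega
    exact Submodule.finrank_eq_zero.mp this
  · intro h
    rw [h] at hrn
    simpa using hrn

lemma vecMul_kalman {n m : ℕ} (A : Matrix (Fin n) (Fin n) ℂ)
    (B : Matrix (Fin n) (Fin m) ℂ) (y : Fin n → ℂ) :
    y ᵥ* kalmanMatrix A B = 0 ↔ ∀ p : Fin n, y ᵥ* (A ^ (p : ℕ) * B) = 0 := by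
  constructor
  · intro h p
    funext j
    have := congrFun h (p, j)
    simpa [kalmanMatrix, Matrix.vecMul, dotProduct] using this
  · intro h
    funext q
    have := congrFun (h q.1) q.2
    simpa [kalmanMatrix, Matrix.vecMul, dotProduct] using this

/-- Extension past degree `n` via Cayley–Hamilton. -/
lemma vecMul_pow_all {n m : ℕ} (A : Matrix (Fin n) (Fin n) ℂ)
    (B : Matrix (Fin n) (Fin m) ℂ) (y : Fin n → ℂ)
    (h : ∀ p : Fin n, y ᵥ* (A ^ (p : ℕ) * B) = 0) (k : ℕ) :
    y ᵥ* (A ^ k * B) = 0 := by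
  rcases Nat.eq_zero_or_pos n with hn | hn
  · subst hn
    funext j
    simp [Matrix.vecMul, dotProduct]
  · set q := Polynomial.X ^ k %ₘ (Matrix.charpoly A) with hq
    have hdeg : q.natDegree < n := by
      have hmonic := Matrix.charpoly_monic A
      have := Polynomial.natDegree_modByMonic_lt (Polynomial.X ^ k) hmonic
        (fun h0 => by
          have := Matrix.charpoly_natDegree_eq_dim A
          simp [h0] at this
          omega)
      rwa [Matrix.charpoly_natDegree_eq_dim, Fintype.card_fin] at this
    have hpow : A ^ k = Polynomial.aeval A q := Matrix.pow_eq_aeval_mod_charpoly A k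
    rw [hpow, Polynomial.aeval_eq_sum_range' hdeg A]
    rw [Matrix.sum_mul, vecMul_sum']
    apply Finset.sum_eq_zero
    intro i hi
    have hin : i < n := Finset.mem_range.mp hi
    have := h ⟨i, hin⟩
    rw [Matrix.smul_mul, vecMul_smul_mat]
    simp only [Fin.val_mk] at this ⊢
    rw [this, smul_zero]

/-- PBH criterion: `(A, B)` is controllable (Kalman rank `n`) iff
`rank (λI − A, B) = n` for every eigenvalue `λ` of `A`. -/
theorem pbh_criterion {n m : ℕ} (A : Matrix (Fin n) (Fin n) ℂ)
    (B : Matrix (Fin n) (Fin m) ℂ) :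
    (kalmanMatrix A B).rank = n ↔
      ∀ lam : ℂ, (∃ x : Fin n → ℂ, x ≠ 0 ∧ A *ᵥ x = lam • x) →
        (Matrix.fromCols (lam • (1 : Matrix (Fin n) (Fin n) ℂ) - A) B).rank = n := by
  constructor
  · -- Kalman full rank → PBH
    intro hK lam _
    rw [full_row_rank_iff] at hK ⊢
    intro y hy
    rw [Matrix.vecMul_fromCols] at hy
    have hy1 : y ᵥ* (lam • (1 : Matrix (Fin n) (Fin n) ℂ) - A) = 0 := by
      funext j; exact congrFun hy (Sum.inl j)
    have hy2 : y ᵥ* B = 0 := by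
      funext j; exact congrFun hy (Sum.inr j)
    have heig : y ᵥ* A = lam • y := by
      have := hy1
      rw [Matrix.vecMul_sub, sub_eq_zero] at this
      rw [← this, vecMul_smul_mat, Matrix.vecMul_one]
    have hpow : ∀ k : ℕ, y ᵥ* A ^ k = lam ^ k • y := by
      intro k
      induction k with
      | zero => simp
      | succ k ih =>
        rw [pow_succ, ← Matrix.vecMul_vecMul, ih, Matrix.smul_vecMul, heig,
          smul_smul, pow_succ]
    apply hK
    rw [vecMul_kalman]
    intro p
    rw [← Matrix.vecMul_vecMul, hpow, Matrix.smul_vecMul, hy2, smul_zero]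
  · -- PBH → Kalman full rank
    intro hPBH
    rw [full_row_rank_iff]
    intro y hy
    by_contra hy0
    rw [vecMul_kalman] at hy
    -- the left-kernel of all `A^k B`
    set N : Submodule ℂ (Fin n → ℂ) :=
      { carrier := {v | ∀ k : ℕ, v ᵥ* (A ^ k * B) = 0}
        add_mem' := fun ha hb k => by
          rw [Matrix.add_vecMul, ha k, hb k, add_zero]
        zero_mem' := fun k => Matrix.zero_vecMul _
        smul_mem' := fun c v hv k => by
          rw [Matrix.smul_vecMul, hv k, smul_zero] } with hN
    have hyN : y ∈ N := fun k => vecMul_pow_all A B y hy k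
    -- N is invariant under the map v ↦ v ᵥ* A
    have hinv : ∀ v ∈ N, (Aᵀ.mulVecLin v) ∈ N := by
      intro v hv k
      rw [Matrix.mulVecLin_apply, Matrix.mulVec_transpose, Matrix.vecMul_vecMul,
        ← Matrix.mul_assoc, ← pow_succ']
      exact hv (k + 1)
    haveI : Nontrivial N := ⟨⟨⟨y, hyN⟩, 0, fun h => hy0 (by simpa using congrArg Subtype.val h)⟩⟩
    obtain ⟨mu, hmu⟩ := Module.End.exists_eigenvalue ((Aᵀ.mulVecLin).restrict hinv)
    obtain ⟨z, hz⟩ := hmu.exists_hasEigenvector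
    have hzval : (z : Fin n → ℂ) ᵥ* A = mu • (z : Fin n → ℂ) := by
      have := hz.apply_eq_smul
      have h2 := congrArg Subtype.val this
      simpa [LinearMap.restrict_apply, Matrix.mulVecLin_apply,
        Matrix.mulVec_transpose] using h2
    have hz0 : (z : Fin n → ℂ) ≠ 0 := fun h => hz.right (by
      apply Subtype.ext; simpa using h)
    -- mu is an eigenvalue of A (right eigenvector exists)
    have hdet : (mu • (1 : Matrix (Fin n) (Fin n) ℂ) - A).det = 0 := by
      have hvm : (mu • (1 : Matrix (Fin n) (Fin n) ℂ) - A)ᵀ *ᵥ (z : Fin n → ℂ) = 0 := by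
        rw [Matrix.mulVec_transpose, Matrix.vecMul_sub, hzval,
          vecMul_smul_mat, Matrix.vecMul_one, sub_self]
      have := (Matrix.exists_mulVec_eq_zero_iff).mp ⟨(z : Fin n → ℂ), hz0, hvm⟩
      rwa [Matrix.det_transpose] at this
    obtain ⟨x, hx0, hx⟩ := Matrix.exists_mulVec_eq_zero_iff.mpr hdet
    have hAx : A *ᵥ x = mu • x := by
      have := hx
      rw [Matrix.sub_mulVec, sub_eq_zero] at this
      rw [← this, Matrix.smul_mulVec, Matrix.one_mulVec]
    have hrank := hPBH mu ⟨x, hx0, hAx⟩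
    rw [full_row_rank_iff] at hrank
    have hzB : (z : Fin n → ℂ) ᵥ* B = 0 := by
      have := z.2 0
      simpa using this
    have : (z : Fin n → ℂ) = 0 := by
      apply hrank
      rw [Matrix.vecMul_fromCols]
      funext j
      cases j with
      | inl j =>
        have : (z : Fin n → ℂ) ᵥ* (mu • (1 : Matrix (Fin n) (Fin n) ℂ) - A) = 0 := by
          rw [Matrix.vecMul_sub, hzval, vecMul_smul_mat, Matrix.vecMul_one, sub_self]
        exact congrFun this j
      | inr j => exact congrFun hzB j
    exact hz0 this
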